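/- In the R-semantics, FOR-loop reversal: if σ(x) = (v, s, c) and ⟨FOR x {P}, σ⟩ ⇓ τ, then ⟨FOR x {inv P}, τ⟩ ⇓ σ, provided x does not occur in P. -/
import Mathlib


def push : ℤ × List ℤ × ℕ → ℤ × List ℤ × ℕ
  | (v, t, 0) => (0, v::t, 0)
  | (0, v::t, c+1) => (0, v::t, c+1)
  | (u, s, c+1) => (u, s, c)

def pop : ℤ × List ℤ × ℕ → ℤ × List ℤ × ℕ
  | (0, v::t, 0) => (v, t, 0)
  | (0, v::t, c+1) => (0, v::t, c+1)
  | (u, s, c) => (u, s, c+1)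

inductive Term where
  | skip : Term
  | inc : String → Term
  | dec : String → Term
  | push : String → Term
  | pop : String → Term
  | seq : Term → Term → Term
  | forLoop : String → Term → Term

def inv : Term → Term
  | .skip => .skip
  | .inc x => .dec x
  | .dec x => .inc x
  | .push x => .pop x
  | .pop x => .push x
  | .seq p q => .seq (inv q) (inv p)
  | .forLoop x p => .forLoop x (inv p)

def occurs (x : String) : Term → Prop
  | .skip => False
  | .inc y => x = y
  | .dec y => x = y
  | .push y => x = y
  | .pop y => x = y
  | .seq p q => occurs x p ∨ occurs x q
  | .forLoop y p => x = y ∨ occurs x p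

/-- Well-formed terms: the leading variable of a `FOR` never occurs in its body. -/
def WF : Term → Prop
  | .seq p q => WF p ∧ WF q
  | .forLoop x p => ¬ occurs x p ∧ WF p
  | _ => True

abbrev State := String → ℤ × List ℤ × ℕ

def upd (σ : State) (x : String) (p : ℤ × List ℤ × ℕ) : State :=
  fun y => if y = x then p else σ y

mutual
/-- The big-step R-semantics of S-CORE. -/
inductive Bigstep : Term → State → State → Prop where
  | skip (σ) : Bigstep .skip σ σ
  | inc (x σ) : Bigstep (.inc x) σ (upd σ x ((σ x).1 + 1, (σ x).2.1, (σ x).2.2))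
  | dec (x σ) : Bigstep (.dec x) σ (upd σ x ((σ x).1 - 1, (σ x).2.1, (σ x).2.2))
  | push (x σ) : Bigstep (.push x) σ (upd σ x (_root_.push (σ x)))
  | pop (x σ) : Bigstep (.pop x) σ (upd σ x (_root_.pop (σ x)))
  | seq {p q σ ν τ} : Bigstep p σ ν → Bigstep q ν τ → Bigstep (.seq p q) σ τ
  | forFwd {x p σ τ} : (σ x).1 ≥ 0 → Iter p (σ x).1.toNat σ τ →
      Bigstep (.forLoop x p) σ τ
  | forBwd {x p σ τ} : (σ x).1 < 0 → Iter (inv p) (-(σ x).1).toNat σ τ →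
      Bigstep (.forLoop x p) σ τ

/-- `Iter p n σ τ`: `n`-fold iteration of `p` takes `σ` to `τ`. -/
inductive Iter : Term → ℕ → State → State → Prop where
  | base (p σ) : Iter p 0 σ σ
  | step {p n σ ν τ} : Bigstep p σ ν → Iter p n ν τ → Iter p (n+1) σ τ
end

lemma pop_push (s : ℤ × List ℤ × ℕ) : pop (push s) = s := by
  obtain ⟨v, t, c⟩ := s
  rcases c with _ | c <;> rcases v with (_ | n) | n <;>
    rcases t with _ | ⟨a, t⟩ <;> first | rfl | simp [push, pop]

lemma push_pop (s : ℤ × List ℤ × ℕ) : push (pop s) = s := by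
  obtain ⟨v, t, c⟩ := s
  rcases c with _ | c <;> rcases v with (_ | n) | n <;>
    rcases t with _ | ⟨a, t⟩ <;> first | rfl | simp [push, pop]

lemma occurs_inv (x : String) (p : Term) : occurs x (inv p) ↔ occurs x p := by
  induction p with
  | skip => simp [inv, occurs]
  | inc y => simp [inv, occurs]
  | dec y => simp [inv, occurs]
  | push y => simp [inv, occurs]
  | pop y => simp [inv, occurs]
  | seq a b iha ihb => simp [inv, occurs, iha, ihb, or_comm]
  | forLoop y a ih => simp [inv, occurs, ih]

lemma inv_inv' (p : Term) : inv (inv p) = p := by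
  induction p with
  | skip => rfl
  | inc y => rfl
  | dec y => rfl
  | push y => rfl
  | pop y => rfl
  | seq a b iha ihb => simp [inv, iha, ihb]
  | forLoop y a ih => simp [inv, ih]

lemma WF_inv {p : Term} (h : WF p) : WF (inv p) := by
  induction p with
  | skip => trivial
  | inc y => trivial
  | dec y => trivial
  | push y => trivial
  | pop y => trivial
  | seq a b iha ihb => exact ⟨ihb h.2, iha h.1⟩
  | forLoop y a ih =>
      exact ⟨fun hc => h.1 ((occurs_inv y a).mp hc), ih h.2⟩


lemma sizeOf_inv (p : Term) : sizeOf (inv p) = sizeOf p := by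
  induction p with
  | seq a b iha ihb => simp [inv, iha, ihb]; omega
  | forLoop y a ih => simp [inv, ih]
  | _ => rfl

lemma iter_unchanged {q : Term} {x : String}
    (hq : ∀ σ τ : State, Bigstep q σ τ → τ x = σ x) :
    ∀ {n : ℕ} {σ τ : State}, Iter q n σ τ → τ x = σ x := by
  intro n
  induction n with
  | zero => intro σ τ h; cases h; rfl
  | succ m ih =>
      intro σ τ h
      cases h with
      | step h1 h2 => rw [ih h2, hq _ _ h1]

theorem unchanged {x : String} : (p : Term) → ∀ {σ τ : State},
    ¬ occurs x p → Bigstep p σ τ → τ x = σ x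
  | .skip, σ, τ, hx, h => by cases h; rfl
  | .inc y, σ, τ, hx, h => by
      cases h; simp only [occurs] at hx; simp [upd, hx]
  | .dec y, σ, τ, hx, h => by
      cases h; simp only [occurs] at hx; simp [upd, hx]
  | .push y, σ, τ, hx, h => by
      cases h; simp only [occurs] at hx; simp [upd, hx]
  | .pop y, σ, τ, hx, h => by
      cases h; simp only [occurs] at hx; simp [upd, hx]
  | .seq a b, σ, τ, hx, h => by
      simp only [occurs] at hx
      cases h with
      | seq h1 h2 =>
          rw [unchanged b (fun c => hx (Or.inr c)) h2,
              unchanged a (fun c => hx (Or.inl c)) h1]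
  | .forLoop y q, σ, τ, hx, h => by
      simp only [occurs] at hx
      have hxq : ¬ occurs x q := fun c => hx (Or.inr c)
      cases h with
      | forFwd h1 h2 =>
          exact iter_unchanged (fun σ τ hb => unchanged q hxq hb) h2
      | forBwd h1 h2 =>
          exact iter_unchanged (fun σ τ hb =>
            unchanged (inv q) (fun c => hxq ((occurs_inv x q).mp c)) hb) h2
termination_by p => sizeOf p
decreasing_by all_goals simp [sizeOf_inv] <;> omega

lemma iter_rev {q : Term}
    (hq : ∀ σ τ : State, Bigstep q σ τ → Bigstep (inv q) τ σ) :
    ∀ {n : ℕ} {σ τ : State}, Iter q n σ τ → Iter (inv q) n τ σ := by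
  intro n
  induction n with
  | zero => intro σ τ h; cases h; exact Iter.base _ _
  | succ m ih =>
      intro σ τ h
      cases h with
      | step h1 h2 =>
          have hs : ∀ {k : ℕ} {α β γ : State}, Iter (inv q) k α β →
              Bigstep (inv q) β γ → Iter (inv q) (k+1) α γ := by
            intro k
            induction k with
            | zero => intro α β γ ha hb; cases ha; exact Iter.step hb (Iter.base _ _)
            | succ j ihj =>
                intro α β γ ha hb
                cases ha with
                | step ha1 ha2 => exact Iter.step ha1 (ihj ha2 hb)
          exact hs (ih h2) (hq _ _ h1)

theorem rev : (p : Term) → ∀ {σ τ : State},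
    WF p → Bigstep p σ τ → Bigstep (inv p) τ σ
  | .skip, σ, τ, hw, h => by cases h; exact Bigstep.skip _
  | .inc y, σ, τ, hw, h => by
      cases h
      have key : ∀ ν : State, ν = upd σ y ((σ y).1 + 1, (σ y).2.1, (σ y).2.2) →
          upd ν y ((ν y).1 - 1, (ν y).2.1, (ν y).2.2) = σ := by
        intro ν hν; subst hν; funext z; by_cases hz : z = y <;> simp [upd, hz]
      have hb := Bigstep.dec y (upd σ y ((σ y).1 + 1, (σ y).2.1, (σ y).2.2))
      rw [key _ rfl] at hb
      exact hb
  | .dec y, σ, τ, hw, h => by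
      cases h
      have key : ∀ ν : State, ν = upd σ y ((σ y).1 - 1, (σ y).2.1, (σ y).2.2) →
          upd ν y ((ν y).1 + 1, (ν y).2.1, (ν y).2.2) = σ := by
        intro ν hν; subst hν; funext z; by_cases hz : z = y <;> simp [upd, hz]
      have hb := Bigstep.inc y (upd σ y ((σ y).1 - 1, (σ y).2.1, (σ y).2.2))
      rw [key _ rfl] at hb
      exact hb
  | .push y, σ, τ, hw, h => by
      cases h
      have key : ∀ ν : State, ν = upd σ y (_root_.push (σ y)) →
          upd ν y (_root_.pop (ν y)) = σ := by
        intro ν hν; subst hν; funext z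
        by_cases hz : z = y <;> simp [upd, hz, pop_push]
      have hb := Bigstep.pop y (upd σ y (_root_.push (σ y)))
      rw [key _ rfl] at hb
      exact hb
  | .pop y, σ, τ, hw, h => by
      cases h
      have key : ∀ ν : State, ν = upd σ y (_root_.pop (σ y)) →
          upd ν y (_root_.push (ν y)) = σ := by
        intro ν hν; subst hν; funext z
        by_cases hz : z = y <;> simp [upd, hz, push_pop]
      have hb := Bigstep.push y (upd σ y (_root_.pop (σ y)))
      rw [key _ rfl] at hb
      exact hb
  | .seq a b, σ, τ, hw, h => by
      cases h with
      | seq h1 h2 => exact Bigstep.seq (rev b hw.2 h2) (rev a hw.1 h1)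
  | .forLoop y q, σ, τ, hw, h => by
      obtain ⟨hyq, hwq⟩ := hw
      cases h with
      | forFwd h1 h2 =>
          have heq : τ y = σ y := iter_unchanged (fun σ τ hb => unchanged q hyq hb) h2
          exact Bigstep.forFwd (x := y) (heq ▸ h1)
            (heq ▸ iter_rev (fun σ τ hb => rev q hwq hb) h2)
      | forBwd h1 h2 =>
          have heq : τ y = σ y := iter_unchanged (fun σ τ hb =>
            unchanged (inv q) (fun c => hyq ((occurs_inv y q).mp c)) hb) h2
          exact Bigstep.forBwd (x := y) (heq ▸ h1)
            (heq ▸ iter_rev (fun σ τ hb => rev (inv q) (WF_inv hwq) hb) h2)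
termination_by p => sizeOf p
decreasing_by all_goals simp [sizeOf_inv] <;> omega

theorem rsem_for_reversal (x : String) (P : Term) (σ τ : State)
    (hx : ¬ occurs x P) (hP : WF P)
    (h : Bigstep (.forLoop x P) σ τ) :
    Bigstep (.forLoop x (inv P)) τ σ :=
  rev (.forLoop x P) ⟨hx, hP⟩ h
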